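/- In the pure untyped call-by-value probabilistic $\lambda$-calculus $\Lambda_\oplus$, let $L_0=\lambda y.\Omega$ and $L_1=\lambda y.I$, where $\Omega=(\lambda x.xx)(\lambda x.xx)$ and $I=\lambda x.x$. Then for every term $P$ with at most $x$ free: if $P[L_0/x]$ converges with probability at least $p$ (i.e., there is $\mathscr{D}$ with $P[L_0/x]\Rightarrow\mathscr{D}$ and $\sum\mathscr{D}=p$), then there exists $q\ge p$ such that $P[L_1/x]$ converges with probability $q$. -/

import Mathlib

open scoped ENNReal

namespace LamPlus

/-- Terms of the pure untyped probabilistic λ-calculus `Λ⊕` (de Bruijn). -/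
inductive LTm : Type
  | var (n : ℕ)
  | lam (M : LTm)
  | app (M N : LTm)
  | choice (M N : LTm)
deriving DecidableEq

/-- Values of `Λ⊕` (call-by-value): abstractions. -/
inductive IsVal : LTm → Prop
  | lam (M) : IsVal (.lam M)

/-- Substitution of the closed term `s` for the variable `k`. -/
def subst : LTm → ℕ → LTm → LTm
  | .var n, k, s => if n = k then s else if k < n then .var (n - 1) else .var n
  | .lam M, k, s => .lam (subst M (k + 1) s)
  | .app M N, k, s => .app (subst M k s) (subst N k s)
  | .choice M N, k, s => .choice (subst M k s) (subst N k s)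

/-- Simultaneous substitution of a list of closed terms for variables `0, 1, …`. -/
def msubst : LTm → List LTm → LTm
  | M, [] => M
  | M, V :: vs => msubst (subst M 0 V) vs

/-- `P` has all its free variables below `k`. -/
def ClosedUnder : ℕ → LTm → Prop
  | k, .var n => n < k
  | k, .lam M => ClosedUnder (k + 1) M
  | k, .app M N => ClosedUnder k M ∧ ClosedUnder k N
  | k, .choice M N => ClosedUnder k M ∧ ClosedUnder k N

/-- One-step reduction of a closed term to a sequence of terms (probabilistic
branching for `⊕`), closed under call-by-value evaluation contexts. -/
inductive Red : LTm → List LTm → Prop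
  | beta {M V : LTm} : IsVal V → Red (.app (.lam M) V) [subst M 0 V]
  | choice (M N : LTm) : Red (.choice M N) [M, N]
  | appL {M : LTm} {Ns : List LTm} (L : LTm) : Red M Ns →
      Red (.app M L) (Ns.map fun N => .app N L)
  | appR {V M : LTm} {Ns : List LTm} : IsVal V → Red M Ns →
      Red (.app V M) (Ns.map fun N => .app V N)

/-- Small-step approximation semantics `M ⇒ 𝒟` of `Λ⊕`. -/
inductive SEval : LTm → (LTm → ℝ≥0∞) → Prop
  | empty (M) : SEval M 0
  | val {V} : IsVal V → SEval V (fun W => if W = V then 1 else 0)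
  | step {M : LTm} {Ns : List LTm} {D : ℕ → LTm → ℝ≥0∞} : Red M Ns →
      (∀ i : Fin Ns.length, SEval (Ns.get i) (D i)) →
      SEval M (fun b => (Ns.length : ℝ≥0∞)⁻¹ * ∑ i : Fin Ns.length, D i b)

/-- `M` converges with probability `p`: some approximation has total mass `p`. -/
def Conv (M : LTm) (p : ℝ≥0∞) : Prop := ∃ D, SEval M D ∧ (∑' V, D V) = p

/-- The identity `I = λx.x`. -/
def Idt : LTm := .lam (.var 0)

/-- The diverging term `Ω = (λx.xx)(λx.xx)`. -/
def Om : LTm := .app (.lam (.app (.var 0) (.var 0))) (.lam (.app (.var 0) (.var 0)))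

/-- `L₀ = λy.Ω`. -/
def L0 : LTm := .lam Om

/-- `L₁ = λy.I`. -/
def L1 : LTm := .lam Idt

/-- `L = λy.(Ω ⊕ I)`. -/
def Lt : LTm := .lam (.choice Om Idt)

/-- `M = λx.λy.(Ω ⊕ I)`. -/
def Mt : LTm := .lam (.lam (.choice Om Idt))

/-- `N = λx.((λy.Ω) ⊕ (λy.I))`. -/
def Nt : LTm := .lam (.choice (.lam Om) (.lam Idt))

end LamPlus

namespace LamPlus

inductive Sim : LTm → LTm → Prop
  | var (n) : Sim (.var n) (.var n)
  | om (M') : Sim Om M'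
  | lam {A A'} : Sim A A' → Sim (.lam A) (.lam A')
  | app {A A' B B'} : Sim A A' → Sim B B' → Sim (.app A B) (.app A' B')
  | choice {A A' B B'} : Sim A A' → Sim B B' → Sim (.choice A B) (.choice A' B')

lemma simRefl : ∀ M, Sim M M := by
  intro M; induction M with
  | var n => exact .var n
  | lam M ih => exact .lam ih
  | app M N ih1 ih2 => exact .app ih1 ih2
  | choice M N ih1 ih2 => exact .choice ih1 ih2

lemma subst_Om (k : ℕ) (V : LTm) : subst Om k V = Om := by
  simp [Om, subst]

lemma simSubst {M M' V V' : LTm} (hS : Sim M M') (hV : Sim V V') :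
    ∀ k, Sim (subst M k V) (subst M' k V') := by
  induction hS with
  | var n =>
    intro k; simp only [subst]; split_ifs <;> first | exact hV | exact simRefl _
  | om M' => intro k; rw [subst_Om]; exact .om _
  | lam _ ih => intro k; exact .lam (ih (k+1))
  | app _ _ ih1 ih2 => intro k; exact .app (ih1 k) (ih2 k)
  | choice _ _ ih1 ih2 => intro k; exact .choice (ih1 k) (ih2 k)

lemma simVal {V V' : LTm} (hS : Sim V V') (hV : IsVal V) : IsVal V' := by
  cases hS with
  | lam _ => exact .lam _
  | om => cases hV
  | var => cases hV
  | app => cases hV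
  | choice => cases hV

inductive OmStuck : LTm → Prop
  | om : OmStuck Om
  | appL {M} (L) : OmStuck M → OmStuck (.app M L)
  | appR {V M} : IsVal V → OmStuck M → OmStuck (.app V M)

lemma stuck_not_val {M} (h : OmStuck M) : ¬ IsVal M := by
  cases h <;> intro hv <;> cases hv

lemma red_lam {A Ns} (h : Red (.lam A) Ns) : False := by cases h

lemma red_Om {Ns} (h : Red Om Ns) : Ns = [Om] := by
  cases h with
  | beta hV => simp [subst, Om]
  | appL _ h => exact absurd h red_lam
  | appR _ h => exact absurd h red_lam

lemma stuckRed {M Ns} (h : OmStuck M) (hr : Red M Ns) :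
    ∀ N ∈ Ns, OmStuck N := by
  induction h generalizing Ns with
  | om => rw [red_Om hr]; intro N hN; simp at hN; subst hN; exact .om
  | appL L hM ih =>
    cases hr with
    | beta hV => cases hM
    | appL _ h =>
      intro N hN
      simp only [List.mem_map] at hN
      obtain ⟨N0, hN0, rfl⟩ := hN
      exact .appL _ (ih h N0 hN0)
    | appR hV _ => exact absurd hV (stuck_not_val hM)
  | appR hV hM ih =>
    cases hr with
    | beta hV' => exact absurd hV' (stuck_not_val hM)
    | appL _ h => cases hV; exact absurd h red_lam
    | appR _ h =>
      intro N hN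
      simp only [List.mem_map] at hN
      obtain ⟨N0, hN0, rfl⟩ := hN
      exact .appR hV (ih h N0 hN0)

lemma forall2_map {S T : LTm → LTm → Prop} {f g : LTm → LTm} {xs ys : List LTm}
    (h : List.Forall₂ S xs ys) (hfg : ∀ a b, S a b → T (f a) (g b)) :
    List.Forall₂ T (xs.map f) (ys.map g) := by
  induction h with
  | nil => simp
  | cons hab _ ih => simpa using List.Forall₂.cons (hfg _ _ hab) ih

lemma simStep {M M'} (hS : Sim M M') :
    ∀ {Ns}, Red M Ns → OmStuck M ∨ ∃ Ns', Red M' Ns' ∧ List.Forall₂ Sim Ns Ns' := by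
  induction hS with
  | var n => intro Ns h; cases h
  | om M' => intro Ns h; exact Or.inl .om
  | lam _ _ => intro Ns h; cases h
  | app hA hB ihA ihB =>
    intro Ns h
    cases h with
    | beta hV =>
      cases hA with
      | lam hA0 =>
        refine Or.inr ⟨_, .beta (simVal hB hV), ?_⟩
        exact List.Forall₂.cons (simSubst hA0 hB 0) List.Forall₂.nil
    | appL L h =>
      rcases ihA h with hst | ⟨Ns', hr', hf⟩
      · exact Or.inl (.appL _ hst)
      · exact Or.inr ⟨_, .appL _ hr', forall2_map hf (fun a b hab => .app hab hB)⟩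
    | appR hV h =>
      rcases ihB h with hst | ⟨Ns', hr', hf⟩
      · exact Or.inl (.appR hV hst)
      · exact Or.inr ⟨_, .appR (simVal hA hV) hr',
          forall2_map hf (fun a b hab => .app hA hab)⟩
  | choice hA hB _ _ =>
    intro Ns h
    cases h with
    | choice =>
      exact Or.inr ⟨_, .choice _ _, .cons hA (.cons hB .nil)⟩

lemma tsum_step (n : ℕ) (D : ℕ → LTm → ℝ≥0∞) :
    ∑' b, ((n : ℝ≥0∞)⁻¹ * ∑ i : Fin n, D i b)
      = (n : ℝ≥0∞)⁻¹ * ∑ i : Fin n, ∑' b, D i b := by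
  rw [ENNReal.tsum_mul_left, Summable.tsum_finsetSum (fun i _ => ENNReal.summable)]

lemma divMass {M D} (h : SEval M D) (hst : OmStuck M) : ∑' b, D b = 0 := by
  induction h with
  | empty M => simp
  | val hV => exact absurd hV (stuck_not_val hst)
  | @step M Ns D hr hsub ih =>
    rw [tsum_step]
    have h0 : (∑ i : Fin Ns.length, ∑' b, D i b) = 0 :=
      Finset.sum_eq_zero (fun i _ =>
        ih i (stuckRed hst hr _ (List.get_mem _ _)))
    rw [h0]; simp

lemma simEval {M D} (h : SEval M D) :
    ∀ {M'}, Sim M M' → ∃ D', SEval M' D' ∧ ∑' b, D b ≤ ∑' b, D' b := by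
  induction h with
  | empty M => intro M' _; exact ⟨0, .empty M', le_rfl⟩
  | val hV =>
    intro M' hS
    have hV' := simVal hS hV
    refine ⟨_, .val hV', ?_⟩
    rw [tsum_ite_eq, tsum_ite_eq]
  | @step M Ns D hr hsub ih =>
    intro M' hS
    rcases simStep hS hr with hst | ⟨Ns', hr', hf⟩
    · have h0 : ∑' b, ((Ns.length : ℝ≥0∞)⁻¹ * ∑ i : Fin Ns.length, D i b) = 0 :=
        divMass (.step hr hsub) hst
      exact ⟨0, .empty M', by rw [h0]; simp⟩
    · have hlen : Ns.length = Ns'.length := hf.length_eq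
      have hget := (List.forall₂_iff_get.mp hf).2
      have hE : ∀ j : Fin Ns'.length,
          ∃ E, SEval (Ns'.get j) E ∧ ∑' b, D j b ≤ ∑' b, E b := by
        intro j
        have hj : (j : ℕ) < Ns.length := by have := j.isLt; omega
        exact ih ⟨j, hj⟩ (hget j hj j.isLt)
      choose E hE1 hE2 using hE
      refine ⟨_, .step (D := fun n =>
          if h : n < Ns'.length then E ⟨n, h⟩ else 0) hr' ?_, ?_⟩
      · intro j
        simpa [j.isLt] using hE1 j
      · rw [tsum_step]
        rw [tsum_step Ns'.length (fun n => if h : n < Ns'.length then E ⟨n, h⟩ else 0)]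
        rw [Fin.sum_univ_eq_sum_range (fun i => ∑' b, D i b),
            Fin.sum_univ_eq_sum_range
              (fun i => ∑' b, (if h : i < Ns'.length then E ⟨i, h⟩ else 0) b),
            hlen]
        refine mul_le_mul_right (Finset.sum_le_sum ?_) _
        intro i hi
        simp only [Finset.mem_range] at hi
        simpa [hi] using hE2 ⟨i, hi⟩

/-- for any term `P` with at most the variable `x` free, if `P[L₀/x]`
converges with probability `p`, then `P[L₁/x]` converges with some probability `q ≥ p`. -/
theorem stmt18 (P : LTm) (hP : ClosedUnder 1 P) (p : ℝ≥0∞)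
    (h : Conv (subst P 0 L0) p) :
    ∃ q, p ≤ q ∧ Conv (subst P 0 L1) q := by
  obtain ⟨D, hD, hp⟩ := h
  have hsim : Sim (subst P 0 L0) (subst P 0 L1) :=
    simSubst (simRefl P) (Sim.lam (Sim.om Idt)) 0
  obtain ⟨D', hD', hle⟩ := simEval hD hsim
  exact ⟨∑' b, D' b, hp ▸ hle, D', hD', rfl⟩

end LamPlus
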